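/- Upper bound on forests of the complete multigraph: for integers n ≥ 2 and c ≥ 1, the number a_{n,c} of forests of the complete multigraph K_{n;c} satisfies a_{n,c} ≤ c^{n−1} · a_{n,1}, where a_{n,1} is the number of forests of the simple complete graph K_{n;1}. -/

import Mathlib

set_option maxHeartbeats 1000000
open SimpleGraph


/-- A subset `F` of the edge indices of a multigraph with endpoint map `ε` is a forest if it
contains no cycle: no `k ≥ 2` pairwise distinct vertices `v₀, …, v_{k−1}` and pairwise
distinct edges `e₀, …, e_{k−1} ∈ F` with `ε eᵢ = {vᵢ, v_{(i+1) mod k}}`. -/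
def IsForest {V ι : Type*} (ε : ι → Sym2 V) (F : Finset ι) : Prop :=
  ¬ ∃ (k : ℕ) (v : Fin (k + 2) → V) (e : Fin (k + 2) → ι),
      Function.Injective v ∧ Function.Injective e ∧
      (∀ i, e i ∈ F) ∧ ∀ i, ε (e i) = s(v i, v (i + 1))

/-- `numForests n c` is `a_{n,c}`, the number of forests of the complete multigraph
`K_{n;c}` whose edge indices are pairs of a non-diagonal unordered pair of vertices in
`Fin n` and a copy index in `Fin c`. -/
noncomputable def numForests (n c : ℕ) : ℕ :=
  {F : Finset ({ p : Sym2 (Fin n) // ¬ p.IsDiag } × Fin c) |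
    IsForest (fun e => (e.1 : Sym2 (Fin n))) F}.ncard

section AuxGraph
variable {V : Type*} {G : SimpleGraph V}

lemma isAcyclic_sup_edge {a b : V} (hG : G.IsAcyclic) (hab : a ≠ b)
    (hnr : ¬ G.Reachable a b) : (G ⊔ edge a b).IsAcyclic := by
  classical
  intro u c hc
  by_cases he : s(a, b) ∈ c.edges
  · have hre := (adj_and_reachable_delete_edges_iff_exists_cycle.mpr ⟨u, c, hc, he⟩).2
    have hle : (G ⊔ edge a b) \ fromEdgeSet {s(a, b)} ≤ G := by
      intro x y hxy
      rw [sdiff_adj, sup_adj, edge_adj] at hxy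
      obtain ⟨h1 | h1, h2⟩ := hxy
      · exact h1
      · exfalso
        apply h2
        rw [fromEdgeSet_adj]
        refine ⟨?_, h1.2⟩
        obtain ⟨h | h, -⟩ := h1
        · rw [h.1, h.2]; rfl
        · rw [h.1, h.2, Sym2.eq_swap]; rfl
    exact hnr (hre.mono hle)
  · apply hG (c.transfer G ?_) (hc.transfer _)
    intro e hme
    have := c.edges_subset_edgeSet hme
    rw [edgeSet_sup, edge_edgeSet_of_ne hab] at this
    rcases this with h | h
    · exact h
    · exact absurd (h ▸ hme) he

lemma exists_isTree_ge [Fintype V] [Nonempty V] :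
    ∀ (k : ℕ) (G : SimpleGraph V), G.IsAcyclic → (G.edgeSetᶜ).ncard ≤ k →
      ∃ T, G ≤ T ∧ T.IsTree := by
  intro k
  induction k with
  | zero =>
    intro G hG hcard
    -- all edges present: G = ⊤... but ⊤ acyclic only if card ≤ 2. Just handle via connectedness.
    by_cases hconn : G.Connected
    · exact ⟨G, le_refl G, ⟨hconn, hG⟩⟩
    · exfalso
      rw [connected_iff] at hconn
      push_neg at hconn
      have hpre : ¬ G.Preconnected := fun h => (not_nonempty_iff.mpr (hconn h)) ‹_›
      rw [Preconnected] at hpre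
      push_neg at hpre
      obtain ⟨a, b, hnr⟩ := hpre
      have hab : a ≠ b := fun h => hnr (h ▸ Reachable.refl a)
      have hmem : s(a, b) ∈ G.edgeSetᶜ := by
        intro h
        exact hnr (((mem_edgeSet G).mp h).reachable)
      have : 0 < (G.edgeSetᶜ).ncard :=
        (Set.ncard_pos (Set.toFinite _)).mpr ⟨_, hmem⟩
      omega
  | succ k ih =>
    intro G hG hcard
    by_cases hconn : G.Connected
    · exact ⟨G, le_refl G, ⟨hconn, hG⟩⟩
    · rw [connected_iff] at hconn
      push_neg at hconn
      have hpre : ¬ G.Preconnected := fun h => (not_nonempty_iff.mpr (hconn h)) ‹_›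
      rw [Preconnected] at hpre
      push_neg at hpre
      obtain ⟨a, b, hnr⟩ := hpre
      have hab : a ≠ b := fun h => hnr (h ▸ Reachable.refl a)
      have hG' := isAcyclic_sup_edge hG hab hnr
      have hsub : (G ⊔ edge a b).edgeSetᶜ ⊂ G.edgeSetᶜ := by
        rw [edgeSet_sup, edge_edgeSet_of_ne hab]
        constructor
        · intro x hx
          simp only [Set.mem_compl_iff, Set.mem_union] at hx ⊢
          exact fun h => hx (Or.inl h)
        · intro hsub
          have : s(a, b) ∈ G.edgeSetᶜ := fun h => hnr (((mem_edgeSet G).mp h).reachable)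
          have := hsub this
          simp at this
      have hlt : ((G ⊔ edge a b).edgeSetᶜ).ncard < (G.edgeSetᶜ).ncard :=
        Set.ncard_lt_ncard hsub (Set.toFinite _)
      obtain ⟨T, hle, hT⟩ := ih (G ⊔ edge a b) hG' (by omega)
      exact ⟨T, le_trans le_sup_left hle, hT⟩

lemma acyclic_ncard_le [Fintype V] [Nonempty V] (hG : G.IsAcyclic) :
    G.edgeSet.ncard ≤ Fintype.card V - 1 := by
  classical
  obtain ⟨T, hle, hT⟩ := exists_isTree_ge (G.edgeSetᶜ).ncard G hG le_rfl
  have h1 : G.edgeSet.ncard ≤ T.edgeSet.ncard :=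
    Set.ncard_le_ncard (edgeSet_mono hle) (Set.toFinite _)
  have := hT.card_edgeFinset
  rw [edgeFinset_card] at this
  have h2 : T.edgeSet.ncard = Fintype.card T.edgeSet := by
    rw [Set.ncard_eq_toFinset_card', Set.toFinset_card]
  omega

end AuxGraph

abbrev EI (n c : ℕ) := { p : Sym2 (Fin n) // ¬ p.IsDiag } × Fin c

variable {n c : ℕ}

lemma forest_fst_inj {F : Finset (EI n c)}
    (hF : IsForest (fun e => (e.1 : Sym2 (Fin n))) F) {e f : EI n c}
    (he : e ∈ F) (hf : f ∈ F) (h : e.1 = f.1) : e = f := by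
  by_contra hne
  obtain ⟨⟨u, v⟩, hp⟩ := Quot.exists_rep (e.1 : Sym2 (Fin n))
  have hpe : (e.1 : Sym2 (Fin n)) = s(u, v) := hp.symm
  have huv : u ≠ v := by
    intro h'
    exact e.1.2 (by rw [hpe, h']; exact Sym2.mk_isDiag_iff.mpr rfl)
  apply hF
  refine ⟨0, ![u, v], ![e, f], ?_, ?_, ?_, ?_⟩
  · intro i j hij
    fin_cases i <;> fin_cases j <;> simp_all
  · intro i j hij
    fin_cases i <;> fin_cases j <;> simp_all
  · intro i; fin_cases i <;> simp [he, hf]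
  · intro i
    fin_cases i
    · simpa using hpe
    · show (f.1 : Sym2 (Fin n)) = s(v, u)
      rw [← h, hpe, Sym2.eq_swap]

lemma walk_support_get {V : Type*} {G : SimpleGraph V} {u v : V} (p : G.Walk u v) :
    ∀ (i : ℕ) (h : i < p.support.length), p.support.get ⟨i, h⟩ = p.getVert i := by
  induction p with
  | nil => intro i h; simp at h; subst h; rfl
  | cons hadj q ih =>
    intro i h
    cases i with
    | zero => rfl
    | succ i =>
      simp only [SimpleGraph.Walk.support_cons, List.get_cons_succ,
        SimpleGraph.Walk.getVert_cons_succ]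
      exact ih i (by simpa [SimpleGraph.Walk.length_support] using h)

lemma cycle_getVert_inj {V : Type*} {G : SimpleGraph V} {v : V} {c : G.Walk v v}
    (hc : c.IsCycle) {i j : ℕ}
    (hi : i < c.length) (hj : j < c.length) (h : c.getVert i = c.getVert j) : i = j := by
  have h3 := hc.three_le_length
  have hnodup := hc.support_nodup
  have hslen : c.support.length = c.length + 1 := by simp [SimpleGraph.Walk.length_support]
  have htlen : c.support.tail.length = c.length := by
    rw [List.length_tail, hslen]; rfl
  set f : ℕ → ℕ := fun i => if i = 0 then c.length else i with hf
  have hfval : ∀ i, i < c.length → c.getVert (f i) = c.getVert i := by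
    intro i hi
    by_cases h0 : i = 0
    · simp [hf, h0, SimpleGraph.Walk.getVert_length, SimpleGraph.Walk.getVert_zero]
    · simp [hf, h0]
  have hfrange : ∀ i, i < c.length → 1 ≤ f i ∧ f i ≤ c.length := by
    intro i hi
    by_cases h0 : i = 0
    · simp [hf, h0]; omega
    · simp [hf, h0]; omega
  have key : ∀ i, 1 ≤ i → i ≤ c.length → ∀ (hh : i - 1 < c.support.tail.length),
      c.support.tail.get ⟨i - 1, hh⟩ = c.getVert i := by
    intro i h1 h2 hh
    rw [List.get_tail, walk_support_get]
    congr 1; omega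
  obtain ⟨hi1, hi2⟩ := hfrange i hi
  obtain ⟨hj1, hj2⟩ := hfrange j hj
  have hhi : f i - 1 < c.support.tail.length := by omega
  have hhj : f j - 1 < c.support.tail.length := by omega
  have : c.support.tail.get ⟨f i - 1, hhi⟩ = c.support.tail.get ⟨f j - 1, hhj⟩ := by
    rw [key _ hi1 hi2, key _ hj1 hj2, hfval i hi, hfval j hj, h]
  have := (hnodup.get_inj_iff.mp this)
  have hfij : f i = f j := by
    have := Fin.mk.injEq .. ▸ this
    (try simp at this); omega
  by_cases h0i : i = 0 <;> by_cases h0j : j = 0 <;> simp [hf, h0i, h0j] at hfij <;> omega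

lemma forest_graph_acyclic {F : Finset (EI n c)}
    (hF : IsForest (fun e => (e.1 : Sym2 (Fin n))) F) :
    (fromEdgeSet {p : Sym2 (Fin n) | ∃ e ∈ F, (e.1 : Sym2 (Fin n)) = p}).IsAcyclic := by
  classical
  set G := fromEdgeSet {p : Sym2 (Fin n) | ∃ e ∈ F, (e.1 : Sym2 (Fin n)) = p} with hGdef
  intro w cyc hcyc
  obtain ⟨k, hk⟩ : ∃ k, cyc.length = (k + 1) + 2 := ⟨cyc.length - 3, by
    have := hcyc.three_le_length; omega⟩
  set m := k + 1 with hm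
  set vv : Fin (m + 2) → Fin n := fun i => cyc.getVert i with hvv
  have hwrap : ∀ i : Fin (m + 2), cyc.getVert (i.1 + 1) = vv (i + 1) := by
    intro i
    by_cases hlast : i.1 = m + 1
    · have h1 : (i + 1 : Fin (m + 2)) = 0 := by
        apply Fin.ext
        simp [Fin.add_def, hlast]
      rw [h1]
      show cyc.getVert (i.1 + 1) = cyc.getVert 0
      rw [hlast, SimpleGraph.Walk.getVert_zero,
        show m + 1 + 1 = cyc.length by omega, cyc.getVert_length]
    · have h1 : ((i + 1 : Fin (m + 2)) : ℕ) = i.1 + 1 := by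
        have := i.2
        simp [Fin.add_def]
        omega
      show cyc.getVert (i.1 + 1) = cyc.getVert ((i + 1 : Fin (m + 2)) : ℕ)
      rw [h1]
  have hadj : ∀ i : Fin (m + 2), G.Adj (vv i) (vv (i + 1)) := by
    intro i
    have := cyc.adj_getVert_succ (i := i.1) (by omega)
    rwa [hwrap i] at this
  have hexists : ∀ i : Fin (m + 2), ∃ e ∈ F, (e.1 : Sym2 (Fin n)) = s(vv i, vv (i + 1)) := by
    intro i
    have := hadj i
    rw [hGdef, fromEdgeSet_adj] at this
    exact this.1
  choose ee heeF heepair using hexists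
  have hvinj : Function.Injective vv := by
    intro i j hij
    exact Fin.ext (cycle_getVert_inj hcyc (by omega) (by omega) hij)
  apply hF
  refine ⟨m, vv, ee, hvinj, ?_, heeF, heepair⟩
  intro i j hij
  have hpair : s(vv i, vv (i + 1)) = s(vv j, vv (j + 1)) := by
    rw [← heepair i, ← heepair j, hij]
  rcases Sym2.eq_iff.mp hpair with ⟨h1, _⟩ | ⟨h1, h2⟩
  · exact hvinj h1
  · exfalso
    have hij1 : i = j + 1 := hvinj h1
    have hji1 : j = i + 1 := (hvinj h2).symm
    rw [hij1] at hji1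
    have : (j : Fin (m+2)) + 2 = j + 0 := by
      rw [add_zero]
      rw [show ((2:Fin (m+2)) = 1 + 1) from Fin.ext (by simp [Fin.val_add]), ← add_assoc]
      exact hji1.symm
    have h20 : (2 : Fin (m + 2)) = 0 := by
      have := add_left_cancel this
      exact this
    have : ((2 : Fin (m + 2)) : ℕ) = 0 := by rw [h20]; rfl
    rw [Fin.val_two] at this
    omega

lemma forest_pairs_card_le (hn : 2 ≤ n) {F : Finset (EI n c)}
    (hF : IsForest (fun e => (e.1 : Sym2 (Fin n))) F) :
    (F.image (fun e => (e.1 : Sym2 (Fin n)))).card ≤ n - 1 := by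
  classical
  haveI : Nonempty (Fin n) := ⟨⟨0, by omega⟩⟩
  set Q := F.image (fun e => (e.1 : Sym2 (Fin n))) with hQ
  have hset : {p : Sym2 (Fin n) | ∃ e ∈ F, (e.1 : Sym2 (Fin n)) = p} = ↑Q := by
    ext p; simp [hQ]
  have hacy : (fromEdgeSet (↑Q : Set (Sym2 (Fin n)))).IsAcyclic :=
    hset ▸ forest_graph_acyclic hF
  have hedge : (fromEdgeSet (↑Q : Set (Sym2 (Fin n)))).edgeSet = ↑Q := by
    rw [edgeSet_fromEdgeSet]
    ext p
    simp only [Set.mem_diff, Finset.mem_coe, Set.mem_setOf_eq, and_iff_left_iff_imp]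
    intro hp hdiag
    rw [hQ] at hp
    simp only [Finset.mem_image] at hp
    obtain ⟨e, -, rfl⟩ := hp
    exact e.1.2 hdiag
  have := acyclic_ncard_le hacy
  rw [hedge, Set.ncard_coe_finset, Fintype.card_fin] at this
  exact this


/-- Upper bound on the number of forests of the complete multigraph:
`a_{n,c} ≤ c^(n−1) · a_{n,1}`. -/
theorem stmt14 (n c : ℕ) (hn : 2 ≤ n) (hc : 1 ≤ c) :
    numForests n c ≤ c ^ (n - 1) * numForests n 1 := by
  classical
  haveI : NeZero c := ⟨by omega⟩
  set ε : EI n c → Sym2 (Fin n) := fun e => (e.1 : Sym2 (Fin n)) with hε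
  set ε1 : EI n 1 → Sym2 (Fin n) := fun e => (e.1 : Sym2 (Fin n)) with hε1
  set Ac : Finset (Finset (EI n c)) := {F : Finset (EI n c) | IsForest ε F}.toFinset with hAc
  set A1 : Finset (Finset (EI n 1)) := {F : Finset (EI n 1) | IsForest ε1 F}.toFinset with hA1
  have hnc : numForests n c = Ac.card := Set.ncard_eq_toFinset_card' _
  have hn1 : numForests n 1 = A1.card := Set.ncard_eq_toFinset_card' _
  set π : Finset (EI n c) → Finset (EI n 1) := fun F => F.image (fun e => (e.1, 0)) with hπ
  -- image of a forest is a forest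
  have himg : ∀ F ∈ Ac, π F ∈ A1 := by
    intro F hFmem
    have hF : IsForest ε F := by rwa [hAc, Set.mem_toFinset] at hFmem
    rw [hA1, Set.mem_toFinset]
    rintro ⟨k, v, e, hv, he, hmem, hpair⟩
    have hex : ∀ i, ∃ g ∈ F, ((g.1 : { p : Sym2 (Fin n) // ¬ p.IsDiag }), (0 : Fin 1)) = e i := by
      intro i
      have := hmem i
      rw [hπ, Finset.mem_image] at this
      obtain ⟨g, hg, hge⟩ := this
      exact ⟨g, hg, hge⟩
    choose g hgF hge using hex
    apply hF
    refine ⟨k, v, g, hv, ?_, hgF, ?_⟩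
    · intro i j hij
      apply he
      rw [← hge i, ← hge j, hij]
    · intro i
      have h1 : ε (g i) = ε1 (e i) := by
        rw [← hge i]
      rw [h1]
      exact hpair i
  -- fiber bound
  have hmain : Ac.card ≤ c ^ (n - 1) * A1.card := by
    refine Finset.card_le_mul_card_image_of_maps_to himg _ ?_
    intro S hS
    rcases Finset.eq_empty_or_nonempty (Finset.filter (fun a => π a = S) Ac) with hemp | hne
    · rw [hemp]; simp
    obtain ⟨F0, hF0m⟩ := hne
    obtain ⟨hF0mem, hF0⟩ := Finset.mem_filter.mp hF0m
    have hF0forest : IsForest ε F0 := by rwa [hAc, Set.mem_toFinset] at hF0mem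
    set T : Finset { p : Sym2 (Fin n) // ¬ p.IsDiag } := S.image Prod.fst with hT
    have hTcard : T.card ≤ n - 1 := by
      have h1 : T = F0.image (fun e => e.1) := by
        rw [hT, ← hF0, hπ, Finset.image_image]
        rfl
      have h2 : T.card = (F0.image (fun e => (e.1 : Sym2 (Fin n)))).card := by
        rw [h1]
        have : F0.image (fun e => (e.1 : Sym2 (Fin n)))
            = (F0.image (fun e => e.1)).image Subtype.val := by
          rw [Finset.image_image]; rfl
        rw [this, Finset.card_image_of_injective _ Subtype.val_injective]
      rw [h2]
      exact forest_pairs_card_le hn hF0forest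
    set Φ : Finset (EI n c) → (↥T → Fin c) := fun F x =>
      if h : ∃ e ∈ F, e.1 = x.1 then h.choose.2 else 0 with hΦ
    have hsubset : ∀ F1, F1 ∈ Ac → π F1 = S → ∀ F2, F2 ∈ Ac → π F2 = S →
        Φ F1 = Φ F2 → F1 ⊆ F2 := by
      intro F1 hF1 hπ1 F2 hF2 hπ2 hΦeq
      have hF1forest : IsForest ε F1 := by rwa [hAc, Set.mem_toFinset] at hF1
      intro e he1
      have hxT : e.1 ∈ T := by
        rw [hT, Finset.mem_image]
        exact ⟨(e.1, 0), by rw [← hπ1, hπ, Finset.mem_image]; exact ⟨e, he1, rfl⟩, rfl⟩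
      set x : ↥T := ⟨e.1, hxT⟩ with hx
      have h1 : ∃ e' ∈ F1, e'.1 = x.1 := ⟨e, he1, rfl⟩
      have h2 : ∃ e' ∈ F2, e'.1 = x.1 := by
        have : (e.1, (0 : Fin 1)) ∈ π F2 := by
          rw [hπ2, ← hπ1, hπ, Finset.mem_image]
          exact ⟨e, he1, rfl⟩
        rw [hπ, Finset.mem_image] at this
        obtain ⟨e', he', heq⟩ := this
        exact ⟨e', he', by rw [hx]; exact (Prod.ext_iff.mp heq).1⟩
      have hv1 : Φ F1 x = e.2 := by
        rw [hΦ]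
        simp only [dif_pos h1]
        have hspec := h1.choose_spec
        have : h1.choose = e := forest_fst_inj hF1forest hspec.1 he1 hspec.2
        rw [this]
      have hv2 : Φ F2 x = h2.choose.2 := by
        rw [hΦ]; simp only [dif_pos h2]
      have hspec2 := h2.choose_spec
      have : h2.choose = e := by
        apply Prod.ext
        · exact hspec2.2
        · rw [← hv2, ← congrFun hΦeq x, hv1]
      rw [← this]
      exact hspec2.1
    have hinj : Set.InjOn Φ ↑(Finset.filter (fun F => π F = S) Ac) := by
      intro F1 hF1 F2 hF2 heq
      simp only [Finset.coe_filter, Set.mem_setOf_eq] at hF1 hF2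
      exact Finset.Subset.antisymm
        (hsubset F1 hF1.1 hF1.2 F2 hF2.1 hF2.2 heq)
        (hsubset F2 hF2.1 hF2.2 F1 hF1.1 hF1.2 heq.symm)
    have hcard : (Finset.filter (fun F => π F = S) Ac).card ≤ Fintype.card (↥T → Fin c) := by
      rw [← Finset.card_univ]
      exact Finset.card_le_card_of_injOn Φ (fun _ _ => Finset.mem_univ _) hinj
    have hfun : Fintype.card (↥T → Fin c) = c ^ T.card := by
      rw [Fintype.card_fun, Fintype.card_fin, Fintype.card_coe]
    rw [hfun] at hcard
    exact hcard.trans (Nat.pow_le_pow_right hc hTcard)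
  rw [hnc, hn1]
  exact hmain
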